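/- Let π_r ⋖ π_{r−1} ⋖ ⋯ ⋖ π_1 be a chain of set partitions of X under refinement (π_r finest, π_1 = the one-block partition {X}). Then the vectors δ_{π_i} − δ_{π_{i−1}} for i = 2,…,r are pairwise orthogonal and nonzero, and they span the same linear subspace of ℝ^(pairs) as the vectors δ_{π_2},…,δ_{π_r}. -/

import Mathlib

open Finset
open scoped Classical

variable {X : Type*} [Fintype X] [DecidableEq X]

/-- i and j (the elements of the pair s) lie in a common block of π. -/
def sameBlockS (π : Finpartition (Finset.univ : Finset X)) (s : Sym2 X) : Prop :=
  ∃ b ∈ π.parts, ∀ x ∈ s, x ∈ b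

/-- δ_π : 1 on pairs whose elements lie in different blocks of π, else 0. -/
noncomputable def deltaPart (π : Finpartition (Finset.univ : Finset X)) :
    EuclideanSpace ℝ (Sym2 X) :=
  WithLp.toLp 2 (fun s : Sym2 X => if sameBlockS π s then (0 : ℝ) else 1)

lemma finpartition_ext (P Q : Finpartition (Finset.univ : Finset X))
    (h : P.parts = Q.parts) : P = Q := by
  cases P; cases Q; simpa using h

/-- If P refines Q (each part of P inside a part of Q) and the sameBlock relations
agree, then P = Q. -/
lemma eq_of_rel (P Q : Finpartition (Finset.univ : Finset X))
    (href : ∀ b ∈ P.parts, ∃ c ∈ Q.parts, b ⊆ c)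
    (hrel : ∀ s : Sym2 X, sameBlockS Q s → sameBlockS P s) : P = Q := by
  have hsub : ∀ b ∈ P.parts, b ∈ Q.parts := by
    intro b hb
    obtain ⟨c, hc, hbc⟩ := href b hb
    obtain ⟨x, hx⟩ := P.nonempty_of_mem_parts hb
    have hbc' : c ⊆ b := by
      intro y hy
      have hQ : sameBlockS Q s(x, y) := by
        refine ⟨c, hc, ?_⟩
        intro z hz
        rcases Sym2.mem_iff.1 hz with rfl | rfl
        · exact hbc hx
        · exact hy
      obtain ⟨b', hb', hmem⟩ := hrel _ hQ
      have hxb' : x ∈ b' := hmem x (Sym2.mem_mk_left _ _)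
      have hyb' : y ∈ b' := hmem y (Sym2.mem_mk_right _ _)
      have : b = b' := P.eq_of_mem_parts hb hb' hx hxb'
      rw [this]; exact hyb'
    have : b = c := subset_antisymm hbc hbc'
    rwa [this]
  apply finpartition_ext
  apply Finset.Subset.antisymm hsub
  intro c hc
  obtain ⟨x, hx⟩ := Q.nonempty_of_mem_parts hc
  obtain ⟨b, hb, hxb⟩ := P.exists_mem (Finset.mem_univ x)
  have hbQ : b ∈ Q.parts := hsub b hb
  have : c = b := Q.eq_of_mem_parts hc hbQ hx hxb
  rwa [this]

lemma chain_refines (r : ℕ)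
    (π : Fin r → Finpartition (Finset.univ : Finset X))
    (hchain : ∀ i : Fin r, ∀ h : i.1 + 1 < r,
      (∀ b ∈ (π ⟨i.1 + 1, h⟩).parts, ∃ c ∈ (π i).parts, b ⊆ c) ∧ π ⟨i.1 + 1, h⟩ ≠ π i)
    (i : Fin r) :
    ∀ n (h : i.1 + n < r), ∀ b ∈ (π ⟨i.1 + n, h⟩).parts, ∃ c ∈ (π i).parts, b ⊆ c := by
  intro n
  induction n with
  | zero =>
    intro h b hb
    exact ⟨b, by simpa using hb, subset_rfl⟩
  | succ m ih =>
    intro h b hb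
    have h1 : i.1 + m < r := by omega
    have step := (hchain ⟨i.1 + m, h1⟩ h).1
    obtain ⟨c, hc, hbc⟩ := step b hb
    obtain ⟨d, hd, hcd⟩ := ih h1 c hc
    exact ⟨d, hd, hbc.trans hcd⟩

lemma sameBlock_mono (r : ℕ)
    (π : Fin r → Finpartition (Finset.univ : Finset X))
    (hchain : ∀ i : Fin r, ∀ h : i.1 + 1 < r,
      (∀ b ∈ (π ⟨i.1 + 1, h⟩).parts, ∃ c ∈ (π i).parts, b ⊆ c) ∧ π ⟨i.1 + 1, h⟩ ≠ π i)
    (i j : Fin r) (hij : i.1 ≤ j.1) (s : Sym2 X)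
    (hs : sameBlockS (π j) s) : sameBlockS (π i) s := by
  obtain ⟨n, hn⟩ : ∃ n, j.1 = i.1 + n := ⟨j.1 - i.1, by omega⟩
  have hj : j = ⟨i.1 + n, by omega⟩ := by exact Fin.ext hn
  rw [hj] at hs
  obtain ⟨b, hb, hmem⟩ := hs
  obtain ⟨c, hc, hbc⟩ := chain_refines r π hchain i n (by omega) b hb
  exact ⟨c, hc, fun x hx => hbc (hmem x hx)⟩

lemma deltaPart_top (π0 : Finpartition (Finset.univ : Finset X))
    (htop : π0.parts = {Finset.univ}) : deltaPart π0 = 0 := by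
  ext s
  have : sameBlockS π0 s := ⟨Finset.univ, by rw [htop]; simp, fun x _ => Finset.mem_univ x⟩
  simp [deltaPart, this]

set_option maxHeartbeats 1000000 in
/-- For a chain π_r ⋖ ⋯ ⋖ π_1 of set partitions (here indexed 0,…,r−1 with index 0 the
coarsest, the one-block partition, and larger indices strictly finer), the vectors
δ_{π_k} − δ_{π_{k−1}}, k = 1,…,r−1, are pairwise orthogonal and nonzero, and span the
same subspace as δ_{π_1},…,δ_{π_{r−1}}. -/
theorem chain_delta_orthogonal_basis (r : ℕ) (hr : 2 ≤ r)
    (π : Fin r → Finpartition (Finset.univ : Finset X))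
    (htop : (π ⟨0, by omega⟩).parts = {Finset.univ})
    (hchain : ∀ i : Fin r, ∀ h : i.1 + 1 < r,
      (∀ b ∈ (π ⟨i.1 + 1, h⟩).parts, ∃ c ∈ (π i).parts, b ⊆ c) ∧ π ⟨i.1 + 1, h⟩ ≠ π i) :
    (∀ i j : Fin r, 1 ≤ i.1 → 1 ≤ j.1 → i ≠ j →
      (inner ℝ (deltaPart (π i) - deltaPart (π ⟨i.1 - 1, by omega⟩))
             (deltaPart (π j) - deltaPart (π ⟨j.1 - 1, by omega⟩)) : ℝ) = 0) ∧
    (∀ i : Fin r, 1 ≤ i.1 →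
      deltaPart (π i) - deltaPart (π ⟨i.1 - 1, by omega⟩) ≠ 0) ∧
    Submodule.span ℝ
        {x : EuclideanSpace ℝ (Sym2 X) | ∃ i : Fin r, 1 ≤ i.1 ∧
          x = deltaPart (π i) - deltaPart (π ⟨i.1 - 1, by omega⟩)} =
      Submodule.span ℝ
        {x : EuclideanSpace ℝ (Sym2 X) | ∃ i : Fin r, 1 ≤ i.1 ∧ x = deltaPart (π i)} := by
  -- helper: pointwise product vanishes for i < j
  have mono := sameBlock_mono r π hchain
  have key : ∀ i j : Fin r, 1 ≤ i.1 → 1 ≤ j.1 → i.1 < j.1 → ∀ s : Sym2 X,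
      ((deltaPart (π i) - deltaPart (π ⟨i.1 - 1, by omega⟩)) s)
      * ((deltaPart (π j) - deltaPart (π ⟨j.1 - 1, by omega⟩)) s) = 0 := by
    intro i j hi hj hij s
    by_cases h : sameBlockS (π i) s
    · have h' : sameBlockS (π ⟨i.1 - 1, by omega⟩) s :=
        mono ⟨i.1 - 1, by omega⟩ i (Nat.sub_le _ _) s h
      simp [deltaPart, PiLp.sub_apply, h, h']
    · have h1 : ¬ sameBlockS (π j) s := fun hc => h (mono i j (by omega) s hc)
      have h2 : ¬ sameBlockS (π ⟨j.1 - 1, by omega⟩) s :=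
        fun hc => h (mono i ⟨j.1 - 1, by omega⟩ (show i.1 ≤ j.1 - 1 by omega) s hc)
      simp [deltaPart, PiLp.sub_apply, h1, h2]
  refine ⟨?_, ?_, ?_⟩
  · intro i j hi hj hij
    rw [PiLp.inner_apply]
    apply Finset.sum_eq_zero
    intro s _
    rcases lt_or_gt_of_ne (fun h => hij (Fin.ext h) : i.1 ≠ j.1) with h | h
    · simp only [RCLike.inner_apply, conj_trivial]
      rw [mul_comm]
      exact key i j hi hj h s
    · simp only [RCLike.inner_apply, conj_trivial]
      exact key j i hj hi h s
  · intro i hi hzero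
    -- if the difference is zero, the sameBlock relations agree, so partitions equal
    have h1 : i.1 - 1 + 1 < r := by omega
    have hne := (hchain ⟨i.1 - 1, by omega⟩ h1).2
    have hii : (⟨i.1 - 1 + 1, h1⟩ : Fin r) = i := Fin.ext (show i.1 - 1 + 1 = i.1 by omega)
    apply hne
    rw [hii]
    apply eq_of_rel
    · intro b hb
      have := (hchain ⟨i.1 - 1, by omega⟩ h1).1
      rw [hii] at this
      exact this b hb
    · intro s hs
      by_contra hns
      have : ((deltaPart (π i) - deltaPart (π ⟨i.1 - 1, by omega⟩)) s) = 0 := by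
        rw [hzero]; rfl
      simp [deltaPart, PiLp.sub_apply, hs, hns] at this
  · apply le_antisymm <;> rw [Submodule.span_le] <;> intro x hx
    · obtain ⟨i, hi, rfl⟩ := hx
      apply Submodule.sub_mem
      · exact Submodule.subset_span ⟨i, hi, rfl⟩
      · by_cases h1 : 1 ≤ i.1 - 1
        · exact Submodule.subset_span ⟨⟨i.1 - 1, by omega⟩, h1, rfl⟩
        · have : i.1 - 1 = 0 := by omega
          have : (⟨i.1 - 1, by omega⟩ : Fin r) = ⟨0, by omega⟩ := Fin.ext this
          rw [this, deltaPart_top _ htop]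
          exact Submodule.zero_mem _
    · obtain ⟨i, hi, rfl⟩ := hx
      -- telescoping induction
      suffices H : ∀ n (h : n < r), deltaPart (π ⟨n, h⟩) ∈ Submodule.span ℝ
          {x : EuclideanSpace ℝ (Sym2 X) | ∃ i : Fin r, 1 ≤ i.1 ∧
            x = deltaPart (π i) - deltaPart (π ⟨i.1 - 1, by omega⟩)} by
        have := H i.1 i.2
        simpa using this
      intro n
      induction n with
      | zero =>
        intro h
        rw [deltaPart_top _ htop]
        exact Submodule.zero_mem _
      | succ m ihm =>
        intro h
        have hm : m < r := by omega
        have hd : deltaPart (π ⟨m + 1, h⟩) =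
            (deltaPart (π ⟨m + 1, h⟩) - deltaPart (π ⟨m, hm⟩)) + deltaPart (π ⟨m, hm⟩) := by
          abel
        rw [hd]
        apply Submodule.add_mem
        · exact Submodule.subset_span ⟨⟨m + 1, h⟩, Nat.le_add_left 1 m, rfl⟩
        · exact ihm hm
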